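/- Let P be a Markov operator on the space C₀(K,ℝ) of continuous functions vanishing at infinity on a locally compact group K, given by averaging against a probability measure σ with full support: (Pf)(k) = ∫ f(k·k') dσ(k'). If P² = P and there exists a nonzero P-invariant function g ∈ C₀(K,ℝ), then g attains its maximum and the set A = {k : g(k) = max g} satisfies A·k' = A for σ-a.e. k', hence A = K and g is constant; consequently K is compact. -/

import Mathlib

open MeasureTheory ZeroAtInfty Filter

private lemma aux_const_of_pos
    {K : Type*} [Group K] [TopologicalSpace K] [IsTopologicalGroup K]
    [LocallyCompactSpace K] [SecondCountableTopology K] [T2Space K]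
    [MeasurableSpace K] [BorelSpace K]
    (σ : Measure K) [IsProbabilityMeasure σ]
    (hfull : ∀ U : Set K, IsOpen U → U.Nonempty → 0 < σ U)
    (g : C₀(K, ℝ))
    (hinv : ∀ k : K, ∫ k', g (k * k') ∂σ = g k)
    {k0 : K} (hpos : 0 < g k0) :
    ∀ k k' : K, g k = g k' := by
  -- g attains its maximum
  obtain ⟨m, hm⟩ : ∃ m : K, ∀ y : K, g y ≤ g m :=
    g.continuous.exists_forall_ge' k0 (g.zero_at_infty'.eventually (eventually_le_nhds hpos))
  -- key step: if g k = g m then g (k * k') = g m for all k'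
  have key : ∀ k : K, g k = g m → ∀ k' : K, g (k * k') = g m := by
    intro k hk k'
    have hint : Integrable (fun k' => g (k * k')) σ := by
      exact BoundedContinuousFunction.integrable σ
        (g.toBCF.compContinuous (ContinuousMap.mk _ (continuous_mul_left k)))
    have hint2 : Integrable (fun k' : K => g m - g (k * k')) σ :=
      (integrable_const (g m)).sub hint
    have hzero : ∫ k', (g m - g (k * k')) ∂σ = 0 := by
      rw [integral_sub (integrable_const _) hint, integral_const, hinv k, hk]
      simp
    have hae : (fun k' : K => g m - g (k * k')) =ᵐ[σ] 0 :=
      (integral_eq_zero_iff_of_nonneg (fun k' => sub_nonneg.2 (hm _)) hint2).mp hzero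
    by_contra hne
    have hlt : g (k * k') < g m := lt_of_le_of_ne (hm _) hne
    have hU : IsOpen {x : K | g (k * x) < g m} :=
      isOpen_lt (g.continuous.comp (continuous_mul_left k)) continuous_const
    have hsub : {x : K | g (k * x) < g m} ⊆ {x : K | (fun k' : K => g m - g (k * k')) x ≠ 0} := by
      intro x hx
      simp only [Set.mem_setOf_eq] at hx ⊢
      exact sub_ne_zero.2 (ne_of_gt (sub_pos.2 hx)).symm ∘ fun h => absurd h (by
        intro h'; exact absurd h' (ne_of_lt (sub_pos.2 hx)).symm)
    have hnull : σ {x : K | (fun k' : K => g m - g (k * k')) x ≠ 0} = 0 := by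
      exact ae_iff.mp hae
    have : σ {x : K | g (k * x) < g m} = 0 :=
      le_antisymm ((measure_mono hsub).trans hnull.le) bot_le
    exact absurd this (ne_of_gt (hfull _ hU ⟨k', hlt⟩))
  have hall : ∀ k : K, g k = g m := by
    intro k
    have := key m rfl (m⁻¹ * k)
    simpa [mul_inv_cancel_left] using this
  intro k k'
  rw [hall k, hall k']

theorem compact_of_nonzero_invariant_C0_function
    {K : Type*} [Group K] [TopologicalSpace K] [IsTopologicalGroup K]
    [LocallyCompactSpace K] [SecondCountableTopology K] [T2Space K]
    [MeasurableSpace K] [BorelSpace K]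
    (σ : Measure K) [IsProbabilityMeasure σ]
    (hfull : ∀ U : Set K, IsOpen U → U.Nonempty → 0 < σ U)
    (hconv : σ.mconv σ = σ)
    (g : C₀(K, ℝ)) (hg : g ≠ 0)
    (hinv : ∀ k : K, ∫ k', g (k * k') ∂σ = g k) :
    (∀ k k' : K, g k = g k') ∧ CompactSpace K := by
  obtain ⟨k0, hk0⟩ : ∃ k : K, g k ≠ 0 := by
    by_contra h
    push_neg at h
    exact hg (DFunLike.ext _ _ fun k => h k)
  have hconst : ∀ k k' : K, g k = g k' := by
    rcases lt_or_gt_of_ne hk0 with hneg | hpos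
    · have hninv : ∀ k : K, ∫ k', (-g) (k * k') ∂σ = (-g) k := by
        intro k
        simp only [ZeroAtInftyContinuousMap.coe_neg, Pi.neg_apply]
        rw [integral_neg, hinv]
      have hnpos : 0 < (-g) k0 := by
        simp only [ZeroAtInftyContinuousMap.coe_neg, Pi.neg_apply]
        linarith
      have := aux_const_of_pos σ hfull (-g) hninv hnpos
      intro k k'
      have h := this k k'
      simp only [ZeroAtInftyContinuousMap.coe_neg, Pi.neg_apply, neg_inj] at h
      exact h
    · exact aux_const_of_pos σ hfull g hinv hpos
  refine ⟨hconst, ?_⟩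
  by_cases hne : (Filter.cocompact K).NeBot
  · exfalso
    haveI := hne
    have htend : Tendsto (fun _ : K => g k0) (Filter.cocompact K) (nhds 0) :=
      g.zero_at_infty'.congr (fun k => hconst k k0)
    exact hk0 (tendsto_nhds_unique tendsto_const_nhds htend)
  · have hbot : Filter.cocompact K = ⊥ := not_neBot.mp hne
    have : (∅ : Set K) ∈ Filter.cocompact K := by rw [hbot]; exact Filter.mem_bot
    rw [Filter.mem_cocompact] at this
    obtain ⟨t, ht, hts⟩ := this
    have : t = Set.univ := by
      rw [Set.eq_univ_iff_forall]
      intro x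
      by_contra hx
      exact hts hx
    rw [this] at ht
    exact ⟨ht⟩
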